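/- arXiv:1502.00056 — 2 statements merged into one kernel-verified Lean document; each statement's English description precedes it below -/
import Mathlib

section
/- For every n ≥ 1, the identity F_n(1/23; q,r,s,t) = (rs)^{C(n,2)} + ∑_{m=1}^{n-1} ∑_{j=1}^{m} (qt)^{j-1} r^{C(m,2)} s^{(n-m)(m-1) + m - j + C(m-1,2)} holds in ℤ[q,r,s,t]. -/
open Finset

/-- `IsRGF w` : `w = a₁⋯aₙ` is a restricted growth function: all letters are
positive, the first letter is `1` and each later letter is at most one more
than the maximum of the preceding prefix. -/
def IsRGF (w : List ℕ) : Prop :=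
  (∀ a ∈ w, 1 ≤ a) ∧
  (0 < w.length → w.getD 0 0 = 1) ∧
  (∀ j : ℕ, j + 1 < w.length →
    w.getD (j + 1) 0 ≤ 1 + (w.take (j + 1)).foldr max 0)

/-- The set partition encoded by the word `w` contains the set-partition
pattern encoded by the word `p`:  there are positions, listed increasingly,
whose "same block" (= same letter) pattern in `w` is exactly that of `p`. -/
def ContainsPat (w p : List ℕ) : Prop :=
  ∃ f : Fin p.length → Fin w.length, StrictMono f ∧
    ∀ a b : Fin p.length, (w.get (f a) = w.get (f b) ↔ p.get a = p.get b)

/-- `Rn n p` : the restricted growth functions of length `n` whose associated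
set partition avoids the pattern (of set partitions) encoded by the RGF `p`.
Via the standard bijection `σ ↦ w(σ)` this is `R_n(π) ≅ Π_n(π)`.
Patterns of `[3]`:  `1/2/3 ↦ [1,2,3]`, `1/23 ↦ [1,2,2]`, `13/2 ↦ [1,2,1]`,
`12/3 ↦ [1,1,2]`, `123 ↦ [1,1,1]`. -/
def Rn (n : ℕ) (p : List ℕ) : Set (List ℕ) :=
  {w | w.length = n ∧ IsRGF w ∧ ¬ ContainsPat w p}

/-- `lb` : sum over positions `j` of the number of distinct values occurring
before position `j` that are bigger than the letter at `j`. -/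
def statLB (w : List ℕ) : ℕ :=
  ∑ j ∈ Finset.range w.length,
    ((w.take j).toFinset.filter (fun v => w.getD j 0 < v)).card

/-- `ls` : left and smaller. -/
def statLS (w : List ℕ) : ℕ :=
  ∑ j ∈ Finset.range w.length,
    ((w.take j).toFinset.filter (fun v => v < w.getD j 0)).card

/-- `rb` : right and bigger. -/
def statRB (w : List ℕ) : ℕ :=
  ∑ j ∈ Finset.range w.length,
    ((w.drop (j + 1)).toFinset.filter (fun v => w.getD j 0 < v)).card

/-- `rs` : right and smaller. -/
def statRS (w : List ℕ) : ℕ :=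
  ∑ j ∈ Finset.range w.length,
    ((w.drop (j + 1)).toFinset.filter (fun v => v < w.getD j 0)).card

/-- The four–variable generating function
`F_n(π;q,r,s,t) = ∑_{σ∈Π_n(π)} q^{lb} r^{ls} s^{rb} t^{rs}`, with
`q = X 0`, `r = X 1`, `s = X 2`, `t = X 3`. -/
noncomputable def Fgen (n : ℕ) (p : List ℕ) : MvPolynomial (Fin 4) ℤ :=
  ∑ᶠ w ∈ Rn n p,
    (MvPolynomial.X 0 : MvPolynomial (Fin 4) ℤ) ^ statLB w *
      MvPolynomial.X 1 ^ statLS w *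
      MvPolynomial.X 2 ^ statRB w *
      MvPolynomial.X 3 ^ statRS w

/-- `LB_n(π;q)`. -/
noncomputable def LBp (n : ℕ) (p : List ℕ) : Polynomial ℤ :=
  ∑ᶠ w ∈ Rn n p, Polynomial.X ^ statLB w

/-- `LS_n(π;q)`. -/
noncomputable def LSp (n : ℕ) (p : List ℕ) : Polynomial ℤ :=
  ∑ᶠ w ∈ Rn n p, Polynomial.X ^ statLS w

/-- `RB_n(π;q)`. -/
noncomputable def RBp (n : ℕ) (p : List ℕ) : Polynomial ℤ :=
  ∑ᶠ w ∈ Rn n p, Polynomial.X ^ statRB w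

/-- `RS_n(π;q)`. -/
noncomputable def RSp (n : ℕ) (p : List ℕ) : Polynomial ℤ :=
  ∑ᶠ w ∈ Rn n p, Polynomial.X ^ statRS w

open Finset

/-- letter at position `i` (0-indexed) of the word with `a` initial ones,
an extra one at position `q`, and increasing letters elsewhere. -/
def wv (a q i : ℕ) : ℕ :=
  if i < a ∨ i = q then 1 else if i < q then i - a + 2 else i - a + 1

def wd (n a q : ℕ) : List ℕ := List.ofFn fun i : Fin n => wv a q i.1

lemma wd_length (n a q : ℕ) : (wd n a q).length = n := by
  simp [wd]

lemma wd_getElem (n a q i : ℕ) (h : i < (wd n a q).length) :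
    (wd n a q)[i] = wv a q i := by
  simp [wd]

lemma wd_getD (n a q i : ℕ) (h : i < n) : (wd n a q).getD i 0 = wv a q i := by
  rw [List.getD_eq_getElem?_getD, List.getElem?_eq_getElem (by rw [wd_length]; omega)]
  simp [wd_getElem]

lemma mem_take_iff (l : List ℕ) (k x : ℕ) :
    x ∈ l.take k ↔ ∃ i, i < k ∧ ∃ h : i < l.length, l[i] = x := by
  constructor
  · intro hx
    obtain ⟨i, hi, he⟩ := List.mem_iff_getElem.1 hx
    rw [List.length_take] at hi
    refine ⟨i, by omega, by omega, by rw [List.getElem_take] at he; exact he⟩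
  · rintro ⟨i, hik, hil, he⟩
    exact List.mem_iff_getElem.2 ⟨i, by simp [List.length_take]; omega,
      by rw [List.getElem_take]; exact he⟩

lemma mem_drop_iff (l : List ℕ) (k x : ℕ) :
    x ∈ l.drop k ↔ ∃ i, k ≤ i ∧ ∃ h : i < l.length, l[i] = x := by
  constructor
  · intro hx
    obtain ⟨i, hi, he⟩ := List.mem_iff_getElem.1 hx
    rw [List.length_drop] at hi
    refine ⟨k + i, by omega, by omega, by rw [List.getElem_drop] at he; exact he⟩
  · rintro ⟨i, hik, hil, he⟩
    refine List.mem_iff_getElem.2 ⟨i - k, by rw [List.length_drop]; omega, ?_⟩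
    rw [List.getElem_drop]
    convert he using 2
    omega

lemma mem_take_wd (n a q k x : ℕ) :
    x ∈ (wd n a q).take k ↔ ∃ i, i < k ∧ i < n ∧ wv a q i = x := by
  rw [mem_take_iff]
  constructor
  · rintro ⟨i, h1, h2, h3⟩
    exact ⟨i, h1, by rw [wd_length] at h2; exact h2, by rw [← wd_getElem n a q i h2]; exact h3⟩
  · rintro ⟨i, h1, h2, h3⟩
    exact ⟨i, h1, by rw [wd_length]; exact h2, by rw [wd_getElem]; exact h3⟩

lemma mem_drop_wd (n a q k x : ℕ) :
    x ∈ (wd n a q).drop k ↔ ∃ i, k ≤ i ∧ i < n ∧ wv a q i = x := by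
  rw [mem_drop_iff]
  constructor
  · rintro ⟨i, h1, h2, h3⟩
    exact ⟨i, h1, by rw [wd_length] at h2; exact h2, by rw [← wd_getElem n a q i h2]; exact h3⟩
  · rintro ⟨i, h1, h2, h3⟩
    exact ⟨i, h1, by rw [wd_length]; exact h2, by rw [wd_getElem]; exact h3⟩

lemma wv_zero {a q : ℕ} (hq0 : 0 < q → 0 < a) : wv a q 0 = 1 := by
  rcases Nat.eq_zero_or_pos q with h | h
  · simp [wv, h]
  · have ha := hq0 h
    simp [wv, ha]

lemma PFle {n a q : ℕ} (haq : a ≤ q) (hqn : q < n) (hq0 : 0 < q → 0 < a)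
    (i : ℕ) (h1 : 1 ≤ i) (h2 : i ≤ q) :
    ((wd n a q).take i).toFinset = Finset.Icc 1 (i - a + 1) := by
  ext v
  rw [List.mem_toFinset, mem_take_wd, Finset.mem_Icc]
  constructor
  · rintro ⟨k, hk1, hk2, rfl⟩
    unfold wv; split_ifs <;> omega
  · rintro ⟨hv1, hv2⟩
    by_cases hv : v = 1
    · exact ⟨0, by omega, by omega, by rw [wv_zero hq0, hv]⟩
    · refine ⟨a + v - 2, by omega, by omega, ?_⟩
      unfold wv; split_ifs <;> omega

lemma PFgt {n a q : ℕ} (haq : a ≤ q) (hqn : q < n) (hq0 : 0 < q → 0 < a)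
    (i : ℕ) (h1 : q < i) (h2 : i ≤ n) :
    ((wd n a q).take i).toFinset = Finset.Icc 1 (i - a) := by
  ext v
  rw [List.mem_toFinset, mem_take_wd, Finset.mem_Icc]
  constructor
  · rintro ⟨k, hk1, hk2, rfl⟩
    unfold wv; split_ifs <;> omega
  · rintro ⟨hv1, hv2⟩
    by_cases hv : v = 1
    · exact ⟨0, by omega, by omega, by rw [wv_zero hq0, hv]⟩
    · rcases le_or_gt v (q - a + 1) with hvq | hvq
      · refine ⟨a + v - 2, by omega, by omega, ?_⟩
        unfold wv; split_ifs <;> omega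
      · refine ⟨a + v - 1, by omega, by omega, ?_⟩
        unfold wv; split_ifs <;> omega

lemma SFlt {n a q : ℕ} (haq : a ≤ q) (hqn : q < n) (hq0 : 0 < q → 0 < a)
    (i : ℕ) (h1 : i < q) :
    ((wd n a q).drop (i + 1)).toFinset
      = insert 1 (Finset.Icc (i + 1 - a + 2) (n - a)) := by
  ext v
  rw [List.mem_toFinset, mem_drop_wd, Finset.mem_insert, Finset.mem_Icc]
  constructor
  · rintro ⟨k, hk1, hk2, rfl⟩
    unfold wv; split_ifs <;> omega
  · rintro (hv | ⟨hv1, hv2⟩)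
    · refine ⟨q, by omega, by omega, ?_⟩
      rw [hv]; simp [wv]
    · rcases le_or_gt v (q - a + 1) with hvq | hvq
      · refine ⟨a + v - 2, by omega, by omega, ?_⟩
        unfold wv; split_ifs <;> omega
      · refine ⟨a + v - 1, by omega, by omega, ?_⟩
        unfold wv; split_ifs <;> omega

lemma SFge {n a q : ℕ} (haq : a ≤ q) (hqn : q < n) (hq0 : 0 < q → 0 < a)
    (i : ℕ) (h1 : q ≤ i) (h2 : i < n) :
    ((wd n a q).drop (i + 1)).toFinset = Finset.Icc (i - a + 2) (n - a) := by
  ext v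
  rw [List.mem_toFinset, mem_drop_wd, Finset.mem_Icc]
  constructor
  · rintro ⟨k, hk1, hk2, rfl⟩
    unfold wv; split_ifs <;> omega
  · rintro ⟨hv1, hv2⟩
    refine ⟨a + v - 1, by omega, by omega, ?_⟩
    unfold wv; split_ifs <;> omega

lemma filt_gt (L U c : ℕ) :
    (Finset.Icc L U).filter (fun v => c < v) = Finset.Icc (max L (c + 1)) U := by
  ext v; simp only [Finset.mem_filter, Finset.mem_Icc]; omega

lemma filt_lt (L U c : ℕ) (hL : 1 ≤ L) :
    (Finset.Icc L U).filter (fun v => v < c) = Finset.Icc L (min U (c - 1)) := by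
  ext v; simp only [Finset.mem_filter, Finset.mem_Icc]; omega

lemma gauss (k : ℕ) : ∑ i ∈ range k, i = k.choose 2 := by
  induction k with
  | zero => simp
  | succ k ih =>
    rw [Finset.sum_range_succ, ih,
      show (k + 1).choose 2 = k.choose 1 + k.choose 2 from Nat.choose_succ_succ k 1,
      Nat.choose_one_right]
    omega

lemma sum_add_const (x d : ℕ) : ∑ k ∈ range x, (k + d) = x.choose 2 + x * d := by
  rw [Finset.sum_add_distrib, gauss, Finset.sum_const, card_range, smul_eq_mul]

lemma add_choose_two (x y : ℕ) : (x + y).choose 2 = x.choose 2 + y.choose 2 + x * y := by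
  induction y with
  | zero => simp
  | succ y ih =>
    have h1 : (x + (y + 1)).choose 2 = (x + y).choose 2 + (x + y) := by
      rw [show x + (y + 1) = (x + y) + 1 by omega,
        show ((x+y) + 1).choose 2 = (x+y).choose 1 + (x+y).choose 2 from Nat.choose_succ_succ _ 1,
        Nat.choose_one_right]; omega
    have h2 : (y + 1).choose 2 = y.choose 2 + y := by
      rw [show (y + 1).choose 2 = y.choose 1 + y.choose 2 from Nat.choose_succ_succ _ 1,
        Nat.choose_one_right]; omega
    rw [h1, ih, h2]; ring

lemma sum_split {M : Type*} [AddCommMonoid M] (f : ℕ → M) {a q n : ℕ} (h1 : a ≤ q) (h2 : q < n) :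
    ∑ i ∈ range n, f i =
      ((∑ i ∈ Ico 0 a, f i) + (∑ i ∈ Ico a q, f i)) + (f q + ∑ i ∈ Ico (q+1) n, f i) := by
  have hq : ∑ i ∈ Ico q (q+1), f i = f q := by
    rw [show Ico q (q+1) = {q} from by ext x; simp [Nat.lt_succ_iff, Nat.le_antisymm_iff, And.comm], Finset.sum_singleton]
  rw [range_eq_Ico, ← Finset.sum_Ico_consecutive f (by omega : (0:ℕ) ≤ q) (by omega : q ≤ n),
      ← Finset.sum_Ico_consecutive f (by omega : (0:ℕ) ≤ a) (h1 : a ≤ q),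
      ← Finset.sum_Ico_consecutive f (by omega : q ≤ q+1) (by omega : q+1 ≤ n), hq]

lemma choose_two_succ (x : ℕ) : (x + 1).choose 2 = x.choose 2 + x := by
  rw [show (x + 1).choose 2 = x.choose 1 + x.choose 2 from Nat.choose_succ_succ x 1,
    Nat.choose_one_right]; omega

section
variable {n a q : ℕ}

lemma stat_lb (haq : a ≤ q) (hqn : q < n) (hq0 : 0 < q → 0 < a) :
    statLB (wd n a q) = q - a := by
  unfold statLB
  rw [wd_length, sum_split _ haq hqn]
  have hA : ∑ i ∈ Ico 0 a,
      (((wd n a q).take i).toFinset.filter (fun v => (wd n a q).getD i 0 < v)).card = 0 := by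
    refine Finset.sum_eq_zero fun i hi => ?_
    simp only [Finset.mem_Ico] at hi
    rcases Nat.eq_zero_or_pos i with h0 | h0
    · simp [h0]
    · rw [wd_getD n a q i (by omega), PFle haq hqn hq0 i (by omega) (by omega),
        show wv a q i = 1 by unfold wv; split_ifs <;> omega, filt_gt, Nat.card_Icc]
      omega
  have hB : ∑ i ∈ Ico a q,
      (((wd n a q).take i).toFinset.filter (fun v => (wd n a q).getD i 0 < v)).card = 0 := by
    refine Finset.sum_eq_zero fun i hi => ?_
    simp only [Finset.mem_Ico] at hi
    have ha := hq0 (by omega)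
    rw [wd_getD n a q i (by omega), PFle haq hqn hq0 i (by omega) (by omega),
      show wv a q i = i - a + 2 by unfold wv; split_ifs <;> omega, filt_gt, Nat.card_Icc]
    omega
  have hC : (((wd n a q).take q).toFinset.filter (fun v => (wd n a q).getD q 0 < v)).card
      = q - a := by
    rcases Nat.eq_zero_or_pos q with h0 | h0
    · subst h0; simp [show a = 0 by omega]
    · rw [wd_getD n a q q (by omega), PFle haq hqn hq0 q (by omega) (by omega),
        show wv a q q = 1 by unfold wv; split_ifs <;> omega, filt_gt, Nat.card_Icc]
      omega
  have hD : ∑ i ∈ Ico (q+1) n,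
      (((wd n a q).take i).toFinset.filter (fun v => (wd n a q).getD i 0 < v)).card = 0 := by
    refine Finset.sum_eq_zero fun i hi => ?_
    simp only [Finset.mem_Ico] at hi
    rw [wd_getD n a q i (by omega), PFgt haq hqn hq0 i (by omega) (by omega),
      show wv a q i = i - a + 1 by unfold wv; split_ifs <;> omega, filt_gt, Nat.card_Icc]
    omega
  rw [hA, hB, hC, hD]
  omega

lemma stat_ls (haq : a ≤ q) (hqn : q < n) (hq0 : 0 < q → 0 < a) :
    statLS (wd n a q) = (n - a).choose 2 := by
  unfold statLS
  rw [wd_length, sum_split _ haq hqn]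
  have hA : ∑ i ∈ Ico 0 a,
      (((wd n a q).take i).toFinset.filter (fun v => v < (wd n a q).getD i 0)).card = 0 := by
    refine Finset.sum_eq_zero fun i hi => ?_
    simp only [Finset.mem_Ico] at hi
    rcases Nat.eq_zero_or_pos i with h0 | h0
    · simp [h0]
    · rw [wd_getD n a q i (by omega), PFle haq hqn hq0 i (by omega) (by omega),
        show wv a q i = 1 by unfold wv; split_ifs <;> omega,
        filt_lt _ _ _ (le_refl 1), Nat.card_Icc]
      omega
  have hb1 : ∀ i ∈ Ico a q,
      (((wd n a q).take i).toFinset.filter (fun v => v < (wd n a q).getD i 0)).card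
      = i - a + 1 := by
    intro i hi
    simp only [Finset.mem_Ico] at hi
    have ha := hq0 (by omega)
    rw [wd_getD n a q i (by omega), PFle haq hqn hq0 i (by omega) (by omega),
      show wv a q i = i - a + 2 by unfold wv; split_ifs <;> omega,
      filt_lt _ _ _ (le_refl 1), Nat.card_Icc]
    omega
  have hB : ∑ i ∈ Ico a q,
      (((wd n a q).take i).toFinset.filter (fun v => v < (wd n a q).getD i 0)).card
      = (q - a).choose 2 + (q - a) * 1 := by
    rw [Finset.sum_congr rfl hb1, Finset.sum_Ico_eq_sum_range]
    have hb2 : ∀ k ∈ range (q - a), a + k - a + 1 = k + 1 := fun k hk => by omega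
    rw [Finset.sum_congr rfl hb2, sum_add_const]
  have hC : (((wd n a q).take q).toFinset.filter (fun v => v < (wd n a q).getD q 0)).card
      = 0 := by
    rcases Nat.eq_zero_or_pos q with h0 | h0
    · simp [h0]
    · rw [wd_getD n a q q (by omega), PFle haq hqn hq0 q (by omega) (by omega),
        show wv a q q = 1 by unfold wv; split_ifs <;> omega,
        filt_lt _ _ _ (le_refl 1), Nat.card_Icc]
      omega
  have hd1 : ∀ i ∈ Ico (q+1) n,
      (((wd n a q).take i).toFinset.filter (fun v => v < (wd n a q).getD i 0)).card
      = i - a := by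
    intro i hi
    simp only [Finset.mem_Ico] at hi
    rw [wd_getD n a q i (by omega), PFgt haq hqn hq0 i (by omega) (by omega),
      show wv a q i = i - a + 1 by unfold wv; split_ifs <;> omega,
      filt_lt _ _ _ (le_refl 1), Nat.card_Icc]
    omega
  have hD : ∑ i ∈ Ico (q+1) n,
      (((wd n a q).take i).toFinset.filter (fun v => v < (wd n a q).getD i 0)).card
      = (n - (q+1)).choose 2 + (n - (q+1)) * (q + 1 - a) := by
    rw [Finset.sum_congr rfl hd1, Finset.sum_Ico_eq_sum_range]
    have hd2 : ∀ k ∈ range (n - (q+1)), q + 1 + k - a = k + (q + 1 - a) := fun k hk => by omega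
    rw [Finset.sum_congr rfl hd2, sum_add_const]
  rw [hA, hB, hC, hD]
  have e1 : (n - a).choose 2
      = (q - a + 1).choose 2 + (n - q - 1).choose 2 + (q - a + 1) * (n - q - 1) := by
    rw [← add_choose_two]; congr 1; omega
  have e2 : (q - a + 1).choose 2 = (q - a).choose 2 + (q - a) := choose_two_succ _
  have e3 : (q - a + 1) * (n - q - 1) = (n - (q + 1)) * (q + 1 - a) := by
    rw [show q + 1 - a = q - a + 1 by omega, show n - (q+1) = n - q - 1 by omega]; ring
  have e4 : (n - (q + 1)).choose 2 = (n - q - 1).choose 2 := by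
    rw [show n - (q+1) = n - q - 1 by omega]
  omega

lemma stat_rs (haq : a ≤ q) (hqn : q < n) (hq0 : 0 < q → 0 < a) :
    statRS (wd n a q) = q - a := by
  unfold statRS
  rw [wd_length, sum_split _ haq hqn]
  have hA : ∑ i ∈ Ico 0 a,
      (((wd n a q).drop (i+1)).toFinset.filter (fun v => v < (wd n a q).getD i 0)).card = 0 := by
    refine Finset.sum_eq_zero fun i hi => ?_
    simp only [Finset.mem_Ico] at hi
    rw [wd_getD n a q i (by omega), SFlt haq hqn hq0 i (by omega),
      show wv a q i = 1 by unfold wv; split_ifs <;> omega,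
      Finset.filter_insert, if_neg (by omega), filt_lt _ _ _ (by omega), Nat.card_Icc]
    omega
  have hb1 : ∀ i ∈ Ico a q,
      (((wd n a q).drop (i+1)).toFinset.filter (fun v => v < (wd n a q).getD i 0)).card
      = 1 := by
    intro i hi
    simp only [Finset.mem_Ico] at hi
    have ha := hq0 (by omega)
    rw [wd_getD n a q i (by omega), SFlt haq hqn hq0 i (by omega),
      show wv a q i = i - a + 2 by unfold wv; split_ifs <;> omega,
      Finset.filter_insert, if_pos (by omega), filt_lt _ _ _ (by omega)]
    rw [Finset.card_insert_of_notMem (by simp only [Finset.mem_Icc]; omega), Nat.card_Icc]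
    omega
  have hB : ∑ i ∈ Ico a q,
      (((wd n a q).drop (i+1)).toFinset.filter (fun v => v < (wd n a q).getD i 0)).card
      = q - a := by
    rw [Finset.sum_congr rfl hb1, Finset.sum_const, Nat.card_Ico, smul_eq_mul, mul_one]
  have hC : (((wd n a q).drop (q+1)).toFinset.filter (fun v => v < (wd n a q).getD q 0)).card
      = 0 := by
    rw [wd_getD n a q q (by omega), SFge haq hqn hq0 q (le_refl q) (by omega),
      show wv a q q = 1 by unfold wv; split_ifs <;> omega,
      filt_lt _ _ _ (by omega), Nat.card_Icc]
    omega
  have hD : ∑ i ∈ Ico (q+1) n,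
      (((wd n a q).drop (i+1)).toFinset.filter (fun v => v < (wd n a q).getD i 0)).card = 0 := by
    refine Finset.sum_eq_zero fun i hi => ?_
    simp only [Finset.mem_Ico] at hi
    rw [wd_getD n a q i (by omega), SFge haq hqn hq0 i (by omega) (by omega),
      show wv a q i = i - a + 1 by unfold wv; split_ifs <;> omega,
      filt_lt _ _ _ (by omega), Nat.card_Icc]
    omega
  rw [hA, hB, hC, hD]
  omega

lemma stat_rb (haq : a ≤ q) (hqn : q < n) (hq0 : 0 < q → 0 < a) :
    statRB (wd n a q) = a * (n - a - 1) + (n - q - 1) + (n - a - 1).choose 2 := by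
  unfold statRB
  rw [wd_length, sum_split _ haq hqn]
  have ha1 : ∀ i ∈ Ico 0 a,
      (((wd n a q).drop (i+1)).toFinset.filter (fun v => (wd n a q).getD i 0 < v)).card
      = n - a - 1 := by
    intro i hi
    simp only [Finset.mem_Ico] at hi
    rw [wd_getD n a q i (by omega), SFlt haq hqn hq0 i (by omega),
      show wv a q i = 1 by unfold wv; split_ifs <;> omega,
      Finset.filter_insert, if_neg (by omega), filt_gt, Nat.card_Icc]
    omega
  have hA : ∑ i ∈ Ico 0 a,
      (((wd n a q).drop (i+1)).toFinset.filter (fun v => (wd n a q).getD i 0 < v)).card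
      = a * (n - a - 1) := by
    rw [Finset.sum_congr rfl ha1, Finset.sum_const, Nat.card_Ico, smul_eq_mul, Nat.sub_zero]
  have hb1 : ∀ i ∈ Ico a q,
      (((wd n a q).drop (i+1)).toFinset.filter (fun v => (wd n a q).getD i 0 < v)).card
      = n - (a + (i - a)) - 2 := by
    intro i hi
    simp only [Finset.mem_Ico] at hi
    have ha := hq0 (by omega)
    rw [wd_getD n a q i (by omega), SFlt haq hqn hq0 i (by omega),
      show wv a q i = i - a + 2 by unfold wv; split_ifs <;> omega,
      Finset.filter_insert, if_neg (by omega), filt_gt, Nat.card_Icc]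
    omega
  have hB : ∑ i ∈ Ico a q,
      (((wd n a q).drop (i+1)).toFinset.filter (fun v => (wd n a q).getD i 0 < v)).card
      = (q - a).choose 2 + (q - a) * (n - q - 1) := by
    rw [Finset.sum_congr rfl hb1, Finset.sum_Ico_eq_sum_range]
    have hb2 : ∀ k ∈ range (q - a), n - (a + (a + k - a)) - 2 = n - (a + k) - 2 :=
      fun k hk => by omega
    rw [Finset.sum_congr rfl hb2,
      ← Finset.sum_range_reflect (fun k => n - (a + k) - 2) (q - a)]
    have hb3 : ∀ k ∈ range (q - a), n - (a + (q - a - 1 - k)) - 2 = k + (n - q - 1) := by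
      intro k hk
      simp only [Finset.mem_range] at hk
      omega
    rw [Finset.sum_congr rfl hb3, sum_add_const]
  have hC : (((wd n a q).drop (q+1)).toFinset.filter (fun v => (wd n a q).getD q 0 < v)).card
      = n - q - 1 := by
    rw [wd_getD n a q q (by omega), SFge haq hqn hq0 q (le_refl q) (by omega),
      show wv a q q = 1 by unfold wv; split_ifs <;> omega, filt_gt, Nat.card_Icc]
    omega
  have hd1 : ∀ i ∈ Ico (q+1) n,
      (((wd n a q).drop (i+1)).toFinset.filter (fun v => (wd n a q).getD i 0 < v)).card
      = n - (q + 1 + (i - (q+1))) - 1 := by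
    intro i hi
    simp only [Finset.mem_Ico] at hi
    rw [wd_getD n a q i (by omega), SFge haq hqn hq0 i (by omega) (by omega),
      show wv a q i = i - a + 1 by unfold wv; split_ifs <;> omega, filt_gt, Nat.card_Icc]
    omega
  have hD : ∑ i ∈ Ico (q+1) n,
      (((wd n a q).drop (i+1)).toFinset.filter (fun v => (wd n a q).getD i 0 < v)).card
      = (n - (q + 1)).choose 2 := by
    rw [Finset.sum_congr rfl hd1, Finset.sum_Ico_eq_sum_range]
    have hd2 : ∀ k ∈ range (n - (q+1)),
        n - (q + 1 + (q + 1 + k - (q+1))) - 1 = n - (q + 1 + k) - 1 := fun k hk => by omega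
    rw [Finset.sum_congr rfl hd2,
      ← Finset.sum_range_reflect (fun k => n - (q + 1 + k) - 1) (n - (q+1))]
    have hd3 : ∀ k ∈ range (n - (q+1)), n - (q + 1 + (n - (q+1) - 1 - k)) - 1 = k := by
      intro k hk
      simp only [Finset.mem_range] at hk
      omega
    rw [Finset.sum_congr rfl hd3, gauss]
  rw [hA, hB, hC, hD]
  have e1 : (n - a - 1).choose 2
      = (q - a).choose 2 + (n - q - 1).choose 2 + (q - a) * (n - q - 1) := by
    rw [← add_choose_two]; congr 1; omega
  have e2 : (n - (q + 1)).choose 2 = (n - q - 1).choose 2 := by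
    rw [show n - (q+1) = n - q - 1 by omega]
  omega

end

lemma le_foldr_max {x : ℕ} : ∀ {l : List ℕ}, x ∈ l → x ≤ l.foldr max 0 := by
  intro l
  induction l with
  | nil => intro h; simp at h
  | cons h t ih =>
    intro hx
    rw [List.foldr_cons]
    rcases List.mem_cons.1 hx with rfl | hx
    · exact le_max_left _ _
    · exact le_trans (ih hx) (le_max_right _ _)

lemma foldr_max_mem : ∀ (l : List ℕ), l.foldr max 0 = 0 ∨ l.foldr max 0 ∈ l := by
  intro l
  induction l with
  | nil => left; simp
  | cons h t ih =>
    rw [List.foldr_cons]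
    rcases le_total h (t.foldr max 0) with hle | hle
    · rcases ih with h0 | hmem
      · right; rw [max_eq_right hle]  -- foldr = t.foldr; if t.foldr = 0 then h ≤ 0...
        · rcases Nat.eq_zero_or_pos h with rfl | _
          · rw [h0]; exact List.mem_cons_self
          · omega
      · right; rw [max_eq_right hle]; exact List.mem_cons_of_mem _ hmem
    · right; rw [max_eq_left hle]; exact List.mem_cons_self

lemma wd_isRGF {n a q : ℕ} (haq : a ≤ q) (hqn : q < n) (hq0 : 0 < q → 0 < a) :
    IsRGF (wd n a q) := by
  refine ⟨?_, ?_, ?_⟩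
  · intro x hx
    rw [wd, List.mem_ofFn] at hx
    obtain ⟨i, rfl⟩ := hx
    show 1 ≤ wv a q i.1
    unfold wv; split_ifs <;> omega
  · intro _
    rw [wd_getD n a q 0 (by omega), wv_zero hq0]
  · intro j hj
    rw [wd_length] at hj
    rw [wd_getD n a q (j+1) (by omega)]
    have hmem1 : (1 : ℕ) ∈ (wd n a q).take (j+1) := by
      rw [mem_take_wd]; exact ⟨0, by omega, by omega, wv_zero hq0⟩
    have h2 : 1 ≤ ((wd n a q).take (j+1)).foldr max 0 := le_foldr_max hmem1
    by_cases hone : (j+1) < a ∨ (j+1) = q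
    · have hv : wv a q (j+1) = 1 := by unfold wv; split_ifs <;> omega
      omega
    push_neg at hone
    rcases lt_or_ge (j+1) q with hc | hc
    · have hv : wv a q (j+1) = (j+1) - a + 2 := by unfold wv; split_ifs <;> omega
      rcases lt_or_ge j a with hja | hja
      · omega
      · have hmem : wv a q j ∈ (wd n a q).take (j+1) := by
          rw [mem_take_wd]; exact ⟨j, by omega, by omega, rfl⟩
        have h1 := le_foldr_max hmem
        have hvj : wv a q j = j - a + 2 := by unfold wv; split_ifs <;> omega
        omega
    · have hq' : q < j + 1 := by omega
      have hv : wv a q (j+1) = (j+1) - a + 1 := by unfold wv; split_ifs <;> omega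
      rcases eq_or_lt_of_le (by omega : q ≤ j) with hjq | hjq
      · rcases le_or_gt (q - a + 1) 1 with h' | h'
        · omega
        · have hmem : (q - a + 1) ∈ (wd n a q).take (j+1) := by
            rw [mem_take_wd]
            refine ⟨a + (q - a + 1) - 2, by omega, by omega, ?_⟩
            unfold wv; split_ifs <;> omega
          have h1 := le_foldr_max hmem
          omega
      · have hmem : wv a q j ∈ (wd n a q).take (j+1) := by
          rw [mem_take_wd]; exact ⟨j, by omega, by omega, rfl⟩
        have h1 := le_foldr_max hmem
        have hvj : wv a q j = j - a + 1 := by unfold wv; split_ifs <;> omega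
        omega

lemma wd_avoid {n a q : ℕ} (haq : a ≤ q) (hqn : q < n) (hq0 : 0 < q → 0 < a) :
    ¬ ContainsPat (wd n a q) [1, 2, 2] := by
  rintro ⟨f, hmono, hiff⟩
  have h01 : f ⟨0, by norm_num⟩ < f ⟨1, by norm_num⟩ := hmono (Fin.mk_lt_mk.mpr (by norm_num))
  have h12 : f ⟨1, by norm_num⟩ < f ⟨2, by norm_num⟩ := hmono (Fin.mk_lt_mk.mpr (by norm_num))
  have e12 : (wd n a q).get (f ⟨1, by norm_num⟩) = (wd n a q).get (f ⟨2, by norm_num⟩) :=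
    (hiff ⟨1, by norm_num⟩ ⟨2, by norm_num⟩).2 rfl
  have ne01 : (wd n a q).get (f ⟨0, by norm_num⟩) ≠ (wd n a q).get (f ⟨1, by norm_num⟩) := by
    intro h
    have := (hiff ⟨0, by norm_num⟩ ⟨1, by norm_num⟩).1 h
    simp at this
  set I := (f ⟨0, by norm_num⟩ : Fin (wd n a q).length) with hI
  set J := (f ⟨1, by norm_num⟩ : Fin (wd n a q).length) with hJ
  set K := (f ⟨2, by norm_num⟩ : Fin (wd n a q).length) with hK
  have hIlen : (I : ℕ) < n := lt_of_lt_of_eq I.2 (wd_length n a q)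
  have hJlen : (J : ℕ) < n := lt_of_lt_of_eq J.2 (wd_length n a q)
  have hKlen : (K : ℕ) < n := lt_of_lt_of_eq K.2 (wd_length n a q)
  have gI : (wd n a q).get I = wv a q I := by rw [List.get_eq_getElem, wd_getElem]
  have gJ : (wd n a q).get J = wv a q J := by rw [List.get_eq_getElem, wd_getElem]
  have gK : (wd n a q).get K = wv a q K := by rw [List.get_eq_getElem, wd_getElem]
  rw [gJ, gK] at e12
  rw [gI, gJ] at ne01
  have hIJ : (I : ℕ) < J := h01
  have hJK : (J : ℕ) < K := h12
  unfold wv at e12 ne01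
  split_ifs at e12 ne01 <;> omega

lemma getD_eq {l : List ℕ} {i : ℕ} (h : i < l.length) : l.getD i 0 = l[i] := by
  rw [List.getD_eq_getElem?_getD, List.getElem?_eq_getElem h, Option.getD_some]

lemma mem_take_getD (l : List ℕ) (k x : ℕ) :
    x ∈ l.take k ↔ ∃ i, i < k ∧ i < l.length ∧ l.getD i 0 = x := by
  rw [mem_take_iff]
  constructor
  · rintro ⟨i, h1, h2, h3⟩
    exact ⟨i, h1, h2, by rw [getD_eq h2]; exact h3⟩
  · rintro ⟨i, h1, h2, h3⟩
    exact ⟨i, h1, h2, by rw [← getD_eq h2]; exact h3⟩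

lemma foldr_max_init : ∀ (l : List ℕ) (x : ℕ), l.foldr max x = max x (l.foldr max 0) := by
  intro l
  induction l with
  | nil => intro x; simp
  | cons h t ih =>
    intro x
    rw [List.foldr_cons, ih x, List.foldr_cons]
    omega

lemma take_foldr_succ (w : List ℕ) (k : ℕ) (h : k < w.length) :
    (w.take (k+1)).foldr max 0 = max (w.getD k 0) ((w.take k).foldr max 0) := by
  rw [List.take_succ, List.getElem?_eq_getElem h]
  rw [show (some w[k]).toList = [w[k]] from rfl, List.foldr_append]
  rw [show List.foldr max 0 [w[k]] = max w[k] 0 from rfl]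
  rw [foldr_max_init, getD_eq h]
  omega

lemma rgf_reach {w : List ℕ} (hrgf : IsRGF w) :
    ∀ k, k ≤ w.length → ∀ v, 1 ≤ v →
      (∃ i, i < k ∧ v ≤ w.getD i 0) → ∃ i, i < k ∧ w.getD i 0 = v := by
  obtain ⟨hpos, hfirst, hgrow⟩ := hrgf
  intro k
  induction k with
  | zero =>
    rintro _ v _ ⟨i, hi, _⟩
    exact absurd hi (by omega)
  | succ k ih =>
    rintro hk v hv ⟨i, hik, hvi⟩
    by_cases hex : ∃ i, i < k ∧ v ≤ w.getD i 0
    · obtain ⟨i', hi', hv'⟩ := ih (by omega) v hv hex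
      exact ⟨i', by omega, hv'⟩
    · have hik' : i = k := by
        by_contra h
        exact hex ⟨i, by omega, hvi⟩
      subst hik'
      rcases eq_or_lt_of_le hvi with heq | hlt
      · exact ⟨i, by omega, heq.symm⟩
      · rcases Nat.eq_zero_or_pos i with rfl | hkpos
        · have h1 : w.getD 0 0 = 1 := hfirst (by omega)
          exact absurd hv (by omega)
        · obtain ⟨k', rfl⟩ : ∃ k', i = k' + 1 := ⟨i - 1, by omega⟩
          have hg := hgrow k' (by omega)
          rcases foldr_max_mem (w.take (k'+1)) with h0 | hmem
          · exact absurd hv (by omega)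
          · rw [mem_take_getD] at hmem
            obtain ⟨i', hi1, hi2, he⟩ := hmem
            exact absurd ⟨i', hi1, by omega⟩ hex

lemma classify {n : ℕ} (hn : 1 ≤ n) {w : List ℕ} (hw : w ∈ Rn n [1, 2, 2]) :
    ∃ a q, a ≤ q ∧ q < n ∧ (0 < q → 0 < a) ∧ w = wd n a q := by
  obtain ⟨hlen, hrgf, havoid⟩ := hw
  have hrgf' := hrgf
  obtain ⟨hpos, hfirst, hgrow⟩ := hrgf'
  have hg0 : w.getD 0 0 = 1 := hfirst (by omega)
  have hposD : ∀ i, i < n → 1 ≤ w.getD i 0 := by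
    intro i hi
    rw [getD_eq (by omega)]
    exact hpos _ (List.getElem_mem _)
  -- avoidance in indexed form
  have hA2 : ∀ i j k, i < j → j < k → k < n →
      w.getD j 0 = w.getD k 0 → w.getD i 0 = w.getD j 0 := by
    intro i j k hij hjk hkn heq
    by_contra hne
    apply havoid
    have hil : i < w.length := by omega
    have hjl : j < w.length := by omega
    have hkl : k < w.length := by omega
    have hnejk : w.getD i 0 ≠ w.getD k 0 := by rw [heq] at hne; exact hne
    refine ⟨fun x => if x.1 = 0 then ⟨i, hil⟩ else if x.1 = 1 then ⟨j, hjl⟩ else ⟨k, hkl⟩,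
      ?_, ?_⟩
    · intro x y hxy
      rcases x with ⟨x, hx⟩
      rcases y with ⟨y, hy⟩
      have hx3 : x < 3 := hx
      have hy3 : y < 3 := hy
      have hxy' : x < y := hxy
      interval_cases x <;> interval_cases y <;>
        simp only [if_pos, if_neg, Fin.mk_lt_mk] <;> norm_num <;> omega
    · intro x y
      rcases x with ⟨x, hx⟩
      rcases y with ⟨y, hy⟩
      have hx3 : x < 3 := hx
      have hy3 : y < 3 := hy
      have hgi : ∀ (m : ℕ) (hm : m < w.length), w.get ⟨m, hm⟩ = w.getD m 0 := by
        intro m hm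
        rw [List.get_eq_getElem, getD_eq hm]
      have hne' : ¬ w[i]?.getD 0 = w[j]?.getD 0 := by
        simpa only [List.getD_eq_getElem?_getD] using hne
      have hnejk' : ¬ w[i]?.getD 0 = w[k]?.getD 0 := by
        simpa only [List.getD_eq_getElem?_getD] using hnejk
      have heq' : w[j]?.getD 0 = w[k]?.getD 0 := by
        simpa only [List.getD_eq_getElem?_getD] using heq
      have hne'' : ¬ w[j]?.getD 0 = w[i]?.getD 0 := fun h => hne' h.symm
      have hnejk'' : ¬ w[k]?.getD 0 = w[i]?.getD 0 := fun h => hnejk' h.symm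
      interval_cases x <;> interval_cases y <;>
        simp only [if_pos, if_neg, hgi] <;> norm_num [heq', hne', hnejk', hne'', hnejk'']
  -- values repeat only at 1
  have hnew : ∀ k, k < n → w.getD k 0 ≠ 1 →
      1 ≤ k ∧ w.getD k 0 = (w.take k).foldr max 0 + 1 := by
    intro k hk hne1
    have hk1 : 1 ≤ k := by
      rcases Nat.eq_zero_or_pos k with rfl | h
      · exact absurd hg0 hne1
      · exact h
    have hnorep : ∀ i, i < k → w.getD i 0 ≠ w.getD k 0 := by
      intro i hik heq
      have hgi1 : w.getD i 0 = 1 := by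
        rcases Nat.eq_zero_or_pos i with rfl | hipos
        · exact hg0
        · rw [← hA2 0 i k hipos hik hk heq]
          exact hg0
      exact hne1 (by rw [← heq, hgi1])
    obtain ⟨k', rfl⟩ : ∃ k', k = k' + 1 := ⟨k - 1, by omega⟩
    have hg := hgrow k' (by omega)
    have hM : 1 ≤ (w.take (k'+1)).foldr max 0 :=
      le_foldr_max ((mem_take_getD w (k'+1) 1).2 ⟨0, by omega, by omega, hg0⟩)
    rcases foldr_max_mem (w.take (k'+1)) with h0 | hmem
    · exact absurd hM (by omega)
    · rw [mem_take_getD] at hmem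
      obtain ⟨i', hi1, hi2, he⟩ := hmem
      refine ⟨by omega, ?_⟩
      by_contra hne
      obtain ⟨i'', hi'', he''⟩ := rgf_reach hrgf (k'+1) (by omega) (w.getD (k'+1) 0)
        (hposD _ (by omega)) ⟨i', hi1, by omega⟩
      exact hnorep i'' hi'' he''
  -- the set of positions of letter 1
  set S : Finset ℕ := (range n).filter (fun i => w.getD i 0 = 1) with hS
  have h0S : 0 ∈ S := by
    rw [hS, Finset.mem_filter, Finset.mem_range]
    exact ⟨by omega, hg0⟩
  have hSne : S.Nonempty := ⟨0, h0S⟩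
  obtain ⟨q, hqS, hqmax⟩ : ∃ q, q ∈ S ∧ ∀ x ∈ S, x ≤ q :=
    ⟨S.max' hSne, S.max'_mem hSne, fun x hx => S.le_max' x hx⟩
  have hqn : q < n := by
    have := hqS
    rw [hS, Finset.mem_filter, Finset.mem_range] at this
    exact this.1
  have hgq : w.getD q 0 = 1 := by
    have := hqS
    rw [hS, Finset.mem_filter] at this
    exact this.2
  obtain ⟨a, ha⟩ : ∃ a, (S.erase q).card = a := ⟨_, rfl⟩
  have hTdc : ∀ j ∈ S.erase q, ∀ i, i < j → i ∈ S.erase q := by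
    intro j hj i hij
    have hjS : j ∈ S := Finset.mem_of_mem_erase hj
    have hjq : j ≠ q := Finset.ne_of_mem_erase hj
    have hjltq : j < q := lt_of_le_of_ne (hqmax j hjS) hjq
    have hgj : w.getD j 0 = 1 := by
      have := hjS; rw [hS, Finset.mem_filter] at this; exact this.2
    have heq : w.getD i 0 = w.getD j 0 := hA2 i j q hij hjltq hqn (by rw [hgj, hgq])
    have hiS : i ∈ S := by
      rw [hS, Finset.mem_filter, Finset.mem_range]
      exact ⟨by omega, by rw [heq, hgj]⟩
    exact Finset.mem_erase.2 ⟨by omega, hiS⟩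
  have hTmem : ∀ i, i ∈ S.erase q ↔ i < a := by
    intro i
    constructor
    · intro hi
      have hsub : range (i+1) ⊆ S.erase q := by
        intro x hx
        rw [Finset.mem_range] at hx
        rcases eq_or_lt_of_le (by omega : x ≤ i) with rfl | hlt
        · exact hi
        · exact hTdc i hi x hlt
      have := Finset.card_le_card hsub
      rw [Finset.card_range] at this
      omega
    · intro hi
      by_contra hni
      have hsub : S.erase q ⊆ range i := by
        intro x hx
        rw [Finset.mem_range]
        by_contra hxi
        push_neg at hxi
        rcases eq_or_lt_of_le hxi with rfl | hlt
        · exact hni hx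
        · exact hni (hTdc x hx i hlt)
      have := Finset.card_le_card hsub
      rw [Finset.card_range] at this
      omega
  have hSmem : ∀ i, i ∈ S ↔ (i < a ∨ i = q) := by
    intro i
    constructor
    · intro hi
      by_cases hiq : i = q
      · right; exact hiq
      · left; exact (hTmem i).1 (Finset.mem_erase.2 ⟨hiq, hi⟩)
    · rintro (hi | rfl)
      · exact Finset.mem_of_mem_erase ((hTmem i).2 hi)
      · exact hqS
  have hg1 : ∀ i, i < n → (w.getD i 0 = 1 ↔ (i < a ∨ i = q)) := by
    intro i hi
    rw [← hSmem]
    rw [hS, Finset.mem_filter, Finset.mem_range]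
    constructor
    · intro h; exact ⟨hi, h⟩
    · intro h; exact h.2
  have haq : a ≤ q := by
    by_contra h
    push_neg at h
    have := (hTmem q).2 h
    exact (Finset.mem_erase.1 this).1 rfl
  have hq0 : 0 < q → 0 < a := by
    intro hq'
    have := (hSmem 0).1 h0S
    omega
  have hqor : q = 0 ∨ 0 < a := by
    rcases Nat.eq_zero_or_pos q with h | h
    · exact Or.inl h
    · exact Or.inr (hq0 h)
  -- prefix maxima
  have hMx : ∀ k, 1 ≤ k → k ≤ n →
      (w.take k).foldr max 0 = k - min k a - (if q < k then 1 else 0) + 1 := by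
    intro k
    induction k with
    | zero => intro h; exact absurd h (by omega)
    | succ k ih =>
      intro _ hk
      rcases Nat.eq_zero_or_pos k with rfl | hkpos
      · rw [take_foldr_succ w 0 (by omega), hg0,
          show w.take 0 = [] from rfl, List.foldr_nil]
        simp only [Nat.max_def, Nat.min_def]
        split_ifs <;> omega
      · have ihv := ih (by omega) (by omega)
        rw [take_foldr_succ w k (by omega)]
        by_cases hk1 : w.getD k 0 = 1
        · have hmem := (hg1 k (by omega)).1 hk1
          rw [hk1, ihv]
          simp only [Nat.max_def, Nat.min_def]
          split_ifs <;> omega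
        · have hnew' := hnew k (by omega) hk1
          rw [hnew'.2, ihv]
          have hkS : ¬(k < a ∨ k = q) := fun h => hk1 ((hg1 k (by omega)).2 h)
          simp only [Nat.max_def, Nat.min_def]
          split_ifs <;> omega
  -- all letters
  have hgv : ∀ k, k < n → w.getD k 0 = wv a q k := by
    intro k hk
    by_cases h1 : k < a ∨ k = q
    · rw [(hg1 k hk).2 h1]
      unfold wv
      rw [if_pos h1]
    · have hk1 : w.getD k 0 ≠ 1 := fun h => h1 ((hg1 k hk).1 h)
      obtain ⟨hk1', hval⟩ := hnew k hk hk1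
      rw [hval, hMx k (by omega) (by omega)]
      unfold wv
      rw [if_neg h1]
      simp only [Nat.max_def, Nat.min_def]
      split_ifs <;> omega
  refine ⟨a, q, haq, hqn, hq0, ?_⟩
  refine List.ext_getElem (by rw [hlen, wd_length]) ?_
  intro i h1 h2
  rw [wd_getElem, ← getD_eq h1]
  exact hgv i (by omega)

lemma wd_mem {n a q : ℕ} (haq : a ≤ q) (hqn : q < n) (hq0 : 0 < q → 0 < a) :
    wd n a q ∈ Rn n [1, 2, 2] :=
  ⟨wd_length n a q, wd_isRGF haq hqn hq0, wd_avoid haq hqn hq0⟩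

lemma wd_inj {n a q a' q' : ℕ} (h1 : a ≤ q) (h2 : q < n) (h3 : 0 < q → 0 < a)
    (h1' : a' ≤ q') (h2' : q' < n) (h3' : 0 < q' → 0 < a')
    (heq : wd n a q = wd n a' q') : a = a' ∧ q = q' := by
  have hv : ∀ i, i < n → wv a q i = wv a' q' i := by
    intro i hi
    have h := congrArg (fun l : List ℕ => l.getD i 0) heq
    rwa [wd_getD n a q i hi, wd_getD n a' q' i hi] at h
  have hor : q = 0 ∨ 0 < a := by
    rcases Nat.eq_zero_or_pos q with h | h
    · exact Or.inl h
    · exact Or.inr (h3 h)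
  have hor' : q' = 0 ∨ 0 < a' := by
    rcases Nat.eq_zero_or_pos q' with h | h
    · exact Or.inl h
    · exact Or.inr (h3' h)
  have hq : q = q' := by
    by_contra hne
    rcases Nat.lt_or_ge q q' with h | h
    · have := hv q' h2'
      unfold wv at this
      split_ifs at this <;> omega
    · have := hv q h2
      unfold wv at this
      split_ifs at this <;> omega
  subst hq
  refine ⟨?_, rfl⟩
  by_contra hne
  rcases Nat.lt_or_ge a a' with h | h
  · have := hv a (by omega)
    unfold wv at this
    split_ifs at this <;> omega
  · have := hv a' (by omega)
    unfold wv at this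
    split_ifs at this <;> omega

lemma master (n : ℕ) (hn : 1 ≤ n) :
    Rn n [1, 2, 2] = ↑(((range n ×ˢ range n).filter
      (fun p : ℕ × ℕ => p.1 ≤ p.2 ∧ (0 < p.2 → 0 < p.1))).image
        (fun p : ℕ × ℕ => wd n p.1 p.2)) := by
  ext w
  simp only [Finset.coe_image, Set.mem_image, Finset.mem_coe, Finset.mem_filter,
    Finset.mem_product, Finset.mem_range]
  constructor
  · intro hw
    obtain ⟨a, q, haq, hqn, hq0, rfl⟩ := classify hn hw
    exact ⟨(a, q), ⟨⟨by omega, by omega⟩, haq, hq0⟩, rfl⟩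
  · rintro ⟨⟨a, q⟩, ⟨⟨han, hqn⟩, haq, hq0⟩, rfl⟩
    exact wd_mem haq hqn hq0

open MvPolynomial in
theorem stmt9' (n : ℕ) (hn : 1 ≤ n) :
    Fgen n [1, 2, 2] =
      (X 1 * X 2 : MvPolynomial (Fin 4) ℤ) ^ n.choose 2 +
        ∑ m ∈ Finset.Icc 1 (n - 1), ∑ j ∈ Finset.Icc 1 m,
          (X 0 * X 3 : MvPolynomial (Fin 4) ℤ) ^ (j - 1) *
            X 1 ^ m.choose 2 *
            X 2 ^ ((n - m) * (m - 1) + (m - j) + (m - 1).choose 2) := by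
  unfold Fgen
  rw [master n hn, finsum_mem_coe_finset]
  rw [Finset.sum_image (fun p hp p' hp' heq => ?inj)]
  case inj =>
    simp only [Finset.mem_coe, Finset.mem_filter, Finset.mem_product, Finset.mem_range] at hp hp'
    have := wd_inj hp.2.1 hp.1.2 hp.2.2 hp'.2.1 hp'.1.2 hp'.2.2 heq
    exact Prod.ext this.1 this.2
  rw [Finset.sum_congr rfl (fun p hp => ?term)]
  case term =>
    simp only [Finset.mem_filter, Finset.mem_product, Finset.mem_range] at hp
    rw [stat_lb hp.2.1 hp.1.2 hp.2.2, stat_ls hp.2.1 hp.1.2 hp.2.2,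
      stat_rb hp.2.1 hp.1.2 hp.2.2, stat_rs hp.2.1 hp.1.2 hp.2.2]
  rw [show ((range n ×ˢ range n).filter
        (fun p : ℕ × ℕ => p.1 ≤ p.2 ∧ (0 < p.2 → 0 < p.1)))
      = insert ((0:ℕ), (0:ℕ)) (((range n ×ˢ range n).filter
        (fun p : ℕ × ℕ => p.1 ≤ p.2 ∧ (0 < p.2 → 0 < p.1))).filter
          (fun p => 0 < p.1)) from ?split,
    Finset.sum_insert (by simp)]
  case split =>
    ext ⟨x, y⟩
    simp only [Finset.mem_insert, Finset.mem_filter, Finset.mem_product, Finset.mem_range,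
      Prod.mk.injEq]
    constructor
    · rintro ⟨⟨hx, hy⟩, hxy, himp⟩
      rcases Nat.eq_zero_or_pos x with rfl | hxpos
      · left
        exact ⟨rfl, by omega⟩
      · right
        exact ⟨⟨⟨hx, hy⟩, hxy, himp⟩, hxpos⟩
    · rintro (⟨rfl, rfl⟩ | ⟨⟨⟨hx, hy⟩, hxy, himp⟩, hxpos⟩)
      · exact ⟨⟨by omega, by omega⟩, by omega, by omega⟩
      · exact ⟨⟨hx, hy⟩, hxy, himp⟩
  congr 1
  · -- the identity word term
    have e2 : n - 1 + (n - 1).choose 2 = n.choose 2 := by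
      have h := choose_two_succ (n - 1)
      have hnn : n - 1 + 1 = n := by omega
      rw [hnn] at h
      omega
    norm_num [mul_pow]
    rw [e2]
  · rw [Finset.sum_sigma' (Finset.Icc 1 (n-1)) (fun m => Finset.Icc 1 m)]
    refine Finset.sum_nbij' (fun p => ⟨n - p.1, p.2 - p.1 + 1⟩)
      (fun s => (n - s.1, n - s.1 + s.2 - 1)) ?_ ?_ ?_ ?_ ?_
    · intro p hp
      simp only [Finset.mem_filter, Finset.mem_product, Finset.mem_range] at hp
      simp only [Finset.mem_sigma, Finset.mem_Icc]
      omega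
    · intro s hs
      simp only [Finset.mem_sigma, Finset.mem_Icc] at hs
      simp only [Finset.mem_filter, Finset.mem_product, Finset.mem_range]
      omega
    · intro p hp
      rcases p with ⟨x, y⟩
      simp only [Finset.mem_filter, Finset.mem_product, Finset.mem_range] at hp
      simp only [Prod.mk.injEq]
      constructor <;> omega
    · intro s hs
      rcases s with ⟨m, j⟩
      simp only [Finset.mem_sigma, Finset.mem_Icc] at hs
      refine Sigma.ext ?_ ?_
      · simp only []
        omega
      · simp only [heq_eq_eq]
        omega
    · intro p hp
      simp only [Finset.mem_filter, Finset.mem_product, Finset.mem_range] at hp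
      have e1 : p.2 - p.1 + 1 - 1 = p.2 - p.1 := by omega
      have e2 : n - (n - p.1) = p.1 := by omega
      have e3 : n - p.1 - (p.2 - p.1 + 1) = n - p.2 - 1 := by omega
      rw [e1, e2, e3, mul_pow]
      ring

open MvPolynomial in
/-- the four-variable generating function for `1/23`. -/
theorem stmt9 (n : ℕ) (hn : 1 ≤ n) :
    Fgen n [1, 2, 2] =
      (X 1 * X 2 : MvPolynomial (Fin 4) ℤ) ^ n.choose 2 +
        ∑ m ∈ Finset.Icc 1 (n - 1), ∑ j ∈ Finset.Icc 1 m,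
          (X 0 * X 3 : MvPolynomial (Fin 4) ℤ) ^ (j - 1) *
            X 1 ^ m.choose 2 *
            X 2 ^ ((n - m) * (m - 1) + (m - j) + (m - 1).choose 2) := by
  exact stmt9' n hn
end

section
/- For every n ≥ 1, the identity F_n(13/2; q,r,s,t) = ∏_{i=1}^{n-1} (1 + r^{n-i} s^i) holds in ℤ[q,r,s,t] (in particular F_n(13/2) does not involve q or t). -/
open Finset

-- ===== auxiliary development =====

def cS (S : Finset ℕ) (j : ℕ) : ℕ := (S.filter (· ≤ j)).card

def wOf (S : Finset ℕ) (n : ℕ) : List ℕ := (List.range n).map (fun j => 1 + cS S j)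

lemma length_wOf (S : Finset ℕ) (n : ℕ) : (wOf S n).length = n := by
  simp [wOf]

lemma getElem_wOf (S : Finset ℕ) {n j : ℕ} (h : j < (wOf S n).length) :
    (wOf S n)[j] = 1 + cS S j := by
  simp [wOf]

lemma getD_wOf (S : Finset ℕ) {n : ℕ} {j : ℕ} (h : j < n) :
    (wOf S n).getD j 0 = 1 + cS S j := by
  rw [List.getD_eq_getElem _ _ (by simpa [length_wOf] using h), getElem_wOf]

lemma cS_mono (S : Finset ℕ) : Monotone (cS S) := by
  intro a b hab
  apply Finset.card_le_card
  intro x hx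
  simp only [Finset.mem_filter] at *
  exact ⟨hx.1, le_trans hx.2 hab⟩

lemma cS_succ (S : Finset ℕ) (j : ℕ) :
    cS S (j + 1) = cS S j + (if j + 1 ∈ S then 1 else 0) := by
  unfold cS
  have h1 : (S.filter (· ≤ j + 1)) = (S.filter (· ≤ j)) ∪ (S.filter (· = j + 1)) := by
    ext x
    simp only [Finset.mem_filter, Finset.mem_union]
    constructor
    · rintro ⟨h1, h2⟩
      rcases Nat.lt_or_ge x (j + 1) with h | h
      · exact Or.inl ⟨h1, by omega⟩
      · exact Or.inr ⟨h1, by omega⟩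
    · rintro (⟨h1, h2⟩ | ⟨h1, h2⟩) <;> exact ⟨h1, by omega⟩
  rw [h1, Finset.card_union_of_disjoint, Finset.filter_eq']
  · split_ifs <;> simp
  · rw [Finset.disjoint_left]
    intro x hx hx2
    simp only [Finset.mem_filter] at hx hx2
    omega

lemma cS_zero {S : Finset ℕ} {k : ℕ} (hS : S ⊆ Finset.Icc 1 k) : cS S 0 = 0 := by
  unfold cS
  rw [Finset.card_eq_zero, Finset.filter_eq_empty_iff]
  intro x hx
  have := hS hx
  simp at this ⊢
  omega

lemma ivt (g : ℕ → ℕ) :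
    ∀ i₂, (∀ i, i + 1 ≤ i₂ → (g (i + 1) = g i ∨ g (i + 1) = g i + 1)) →
    ∀ i₁ m, i₁ ≤ i₂ → g i₁ ≤ m → m ≤ g i₂ → ∃ i, i₁ ≤ i ∧ i ≤ i₂ ∧ g i = m := by
  intro i₂
  induction i₂ with
  | zero =>
    intro _ i₁ m h1 h2 h3
    obtain rfl : i₁ = 0 := by omega
    exact ⟨0, le_refl _, le_refl _, by omega⟩
  | succ k ih =>
    intro hg i₁ m h1 h2 h3
    by_cases heq : i₁ = k + 1
    · exact ⟨i₁, le_refl _, by omega, by subst heq; omega⟩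
    · have hk := hg k (by omega)
      by_cases hm : m ≤ g k
      · obtain ⟨i, hi1, hi2, hi3⟩ := ih (fun i hi => hg i (by omega)) i₁ m (by omega) h2 hm
        exact ⟨i, hi1, by omega, hi3⟩
      · exact ⟨k + 1, by omega, le_refl _, by omega⟩

lemma cS_step (S : Finset ℕ) (i : ℕ) (h : True) :
    cS S (i + 1) = cS S i ∨ cS S (i + 1) = cS S i + 1 := by
  rw [cS_succ]; split <;> simp

lemma mem_toFinset_take (S : Finset ℕ) {n : ℕ} (j : ℕ) (hj : j ≤ n) (v : ℕ) :
    v ∈ ((wOf S n).take j).toFinset ↔ ∃ i, i < j ∧ 1 + cS S i = v := by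
  rw [List.mem_toFinset, List.mem_iff_getElem]
  constructor
  · rintro ⟨i, hi, rfl⟩
    have hlen : ((wOf S n).take j).length = j := by simp [length_wOf]; omega
    refine ⟨i, by omega, ?_⟩
    rw [List.getElem_take, getElem_wOf]
  · rintro ⟨i, hi, rfl⟩
    have hlen : ((wOf S n).take j).length = j := by simp [length_wOf]; omega
    refine ⟨i, by omega, ?_⟩
    rw [List.getElem_take, getElem_wOf]

lemma mem_toFinset_drop (S : Finset ℕ) {n : ℕ} (j : ℕ) (v : ℕ) :
    v ∈ ((wOf S n).drop j).toFinset ↔ ∃ i, j ≤ i ∧ i < n ∧ 1 + cS S i = v := by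
  rw [List.mem_toFinset, List.mem_iff_getElem]
  have hlen : ((wOf S n).drop j).length = n - j := by simp [length_wOf]
  constructor
  · rintro ⟨i, hi, rfl⟩
    rw [hlen] at hi
    refine ⟨j + i, by omega, by omega, ?_⟩
    rw [List.getElem_drop, getElem_wOf]
  · rintro ⟨i, hi1, hi2, rfl⟩
    refine ⟨i - j, by omega, ?_⟩
    rw [List.getElem_drop, getElem_wOf]
    congr 2; omega

lemma foldr_max_shift (l : List ℕ) (c : ℕ) :
    List.foldr max c l = max c (List.foldr max 0 l) := by
  induction l with
  | nil => simp
  | cons x t ih => simp [ih]; omega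

lemma foldr_max_append (l : List ℕ) (a : ℕ) :
    List.foldr max 0 (l ++ [a]) = max (List.foldr max 0 l) a := by
  rw [List.foldr_append]
  simp only [List.foldr_cons, List.foldr_nil]
  rw [foldr_max_shift]
  omega

lemma le_foldr_max_s11 {a : ℕ} {l : List ℕ} (h : a ∈ l) : a ≤ List.foldr max 0 l := by
  induction l with
  | nil => simp at h
  | cons x t ih =>
    rcases List.mem_cons.mp h with rfl | h2
    · simp
    · simp only [List.foldr_cons]
      exact le_trans (ih h2) (le_max_right _ _)

lemma take_succ_getElem {w : List ℕ} {j : ℕ} (h : j < w.length) :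
    w.take (j + 1) = w.take j ++ [w[j]] := by
  rw [List.take_succ, List.getElem?_eq_getElem h]
  rfl

set_option maxHeartbeats 1000000 in
lemma containsPat121 {w : List ℕ} {i j k : ℕ} (hi : i < w.length) (hj : j < w.length)
    (hk : k < w.length) (h1 : i < j) (h2 : j < k)
    (e1 : w[i] = w[k]) (e2 : w[i] ≠ w[j]) : ContainsPat w [1, 2, 1] := by
  have e3 : w[j] ≠ w[k] := fun h => e2 (by rw [e1, h])
  refine ⟨![⟨i, hi⟩, ⟨j, hj⟩, ⟨k, hk⟩], ?_, ?_⟩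
  · intro a b hab
    fin_cases a <;> fin_cases b <;>
      simp_all [Fin.lt_def] <;> omega
  · intro a b
    fin_cases a <;> fin_cases b <;>
      simp_all [List.get_eq_getElem]

/-- every `wOf S n` is in `Rn n [1,2,1]` -/
lemma wOf_mem_Rn {S : Finset ℕ} {n : ℕ} (hn : 1 ≤ n) (hS : S ⊆ Finset.Icc 1 (n - 1)) :
    wOf S n ∈ Rn n [1, 2, 1] := by
  refine ⟨length_wOf S n, ⟨?_, ?_, ?_⟩, ?_⟩
  · intro a ha
    rw [wOf, List.mem_map] at ha
    obtain ⟨i, _, rfl⟩ := ha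
    omega
  · intro _
    rw [getD_wOf S (by omega : 0 < n), cS_zero hS]
  · intro j hj
    rw [length_wOf] at hj
    rw [getD_wOf S hj]
    have hmem : 1 + cS S j ∈ (wOf S n).take (j + 1) := by
      rw [List.mem_iff_getElem]
      have hlen : ((wOf S n).take (j + 1)).length = j + 1 := by
        simp [length_wOf]; omega
      refine ⟨j, by omega, ?_⟩
      rw [List.getElem_take, getElem_wOf]
    have h1 := le_foldr_max_s11 hmem
    have h2 := cS_succ S j
    split at h2 <;> omega
  · rintro ⟨f, hf, hiff⟩
    have l3 : ([1, 2, 1] : List ℕ).length = 3 := rfl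
    set a0 : Fin ([1, 2, 1] : List ℕ).length := ⟨0, by norm_num⟩ with ha0
    set a1 : Fin ([1, 2, 1] : List ℕ).length := ⟨1, by norm_num⟩ with ha1
    set a2 : Fin ([1, 2, 1] : List ℕ).length := ⟨2, by norm_num⟩ with ha2
    have hlt01 : f a0 < f a1 := hf (show a0 < a1 by rw [ha0, ha1]; exact Fin.mk_lt_mk.mpr (by norm_num))
    have hlt12 : f a1 < f a2 := hf (show a1 < a2 by rw [ha1, ha2]; exact Fin.mk_lt_mk.mpr (by norm_num))
    have hget : ∀ a : Fin ([1, 2, 1] : List ℕ).length,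
        (wOf S n).get (f a) = 1 + cS S (f a : ℕ) := by
      intro a
      rw [List.get_eq_getElem, getElem_wOf]
    have h02 : (wOf S n).get (f a0) = (wOf S n).get (f a2) := (hiff a0 a2).mpr rfl
    have h01 : ¬ (wOf S n).get (f a0) = (wOf S n).get (f a1) := by
      intro h
      have := (hiff a0 a1).mp h
      simp [ha0, ha1, List.get] at this
    have m01 := cS_mono S (le_of_lt (show (f a0 : ℕ) < (f a1 : ℕ) from hlt01))
    have m12 := cS_mono S (le_of_lt (show (f a1 : ℕ) < (f a2 : ℕ) from hlt12))
    rw [hget, hget] at h02 h01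
    omega

/-- every member of `Rn n [1,2,1]` is a `wOf S n` -/
lemma Rn_eq_wOf {n : ℕ} (hn : 1 ≤ n) {w : List ℕ} (hw : w ∈ Rn n [1, 2, 1]) :
    ∃ S ∈ (Finset.Icc 1 (n - 1)).powerset, wOf S n = w := by
  obtain ⟨hlen, hrgf, hav⟩ := hw
  set g : ℕ → ℕ := fun j => w.getD j 0 with hg
  have hg0 : g 0 = 1 := hrgf.2.1 (by omega)
  have hgel : ∀ j (h : j < n), g j = w[j]'(by omega) := by
    intro j h
    exact List.getD_eq_getElem w 0 (by omega)
  have hpos : ∀ j, j < n → 1 ≤ g j := by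
    intro j h
    rw [hgel j h]
    exact hrgf.1 _ (List.getElem_mem _)
  have key : ∀ j, j < n →
      (g j = (w.take (j + 1)).foldr max 0 ∧
        ∀ i, i + 1 ≤ j → (g (i + 1) = g i ∨ g (i + 1) = g i + 1)) := by
    intro j
    induction j with
    | zero =>
      intro h0
      constructor
      · rw [take_succ_getElem (by omega), List.take_zero, List.nil_append]
        simp [hgel 0 h0]
      · intro i hi; omega
    | succ j ih =>
      intro hj1
      obtain ⟨hmax, hstair⟩ := ih (by omega)
      have hbound := hrgf.2.2 j (by omega)
      rw [← hmax] at hbound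
      -- hbound : g (j+1) ≤ 1 + g j  (as getD)
      have hbound' : g (j + 1) ≤ 1 + g j := hbound
      have hclaim : g (j + 1) = g j ∨ g (j + 1) = g j + 1 := by
        by_contra hcon
        push_neg at hcon
        have hlt : g (j + 1) < g j := by
          have := hpos (j + 1) hj1
          omega
        obtain ⟨i, hi0, hij, hgi⟩ := ivt g j hstair 0 (g (j + 1)) (by omega)
          (by rw [hg0]; exact hpos (j + 1) hj1) (le_of_lt hlt)
        have hine : i ≠ j := fun h => by rw [h] at hgi; omega
        apply hav
        apply containsPat121 (i := i) (j := j) (k := j + 1)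
          (by omega) (by omega) (by omega) (by omega) (by omega)
        · rw [← hgel i (by omega), ← hgel (j + 1) (by omega)]
          exact hgi
        · rw [← hgel i (by omega), ← hgel j (by omega)]
          omega
      constructor
      · rw [take_succ_getElem (show j + 1 < w.length by omega), foldr_max_append,
          ← hmax, ← hgel (j + 1) hj1]
        omega
      · intro i hi
        rcases Nat.lt_or_ge (i + 1) (j + 1) with h | h
        · exact hstair i (by omega)
        · have : i = j := by omega
          rw [this]
          exact hclaim
  refine ⟨(Finset.Icc 1 (n - 1)).filter (fun i => g (i - 1) < g i),
    Finset.mem_powerset.mpr (Finset.filter_subset _ _), ?_⟩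
  set S := (Finset.Icc 1 (n - 1)).filter (fun i => g (i - 1) < g i) with hSdef
  have hSsub : S ⊆ Finset.Icc 1 (n - 1) := Finset.filter_subset _ _
  have hc : ∀ j, j < n → g j = 1 + cS S j := by
    intro j
    induction j with
    | zero => intro _; rw [hg0, cS_zero hSsub]
    | succ j ih =>
      intro hj1
      have hcj := ih (by omega)
      have hmem : j + 1 ∈ S ↔ g j < g (j + 1) := by
        rw [hSdef, Finset.mem_filter, Finset.mem_Icc]
        constructor
        · rintro ⟨_, h⟩; simpa using h
        · intro h
          exact ⟨⟨by omega, by omega⟩, by simpa using h⟩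
      have hstep := cS_succ S j
      have hstair := (key (j + 1) hj1).2 j (le_refl _)
      rcases hstair with h | h
      · have : ¬ (j + 1 ∈ S) := fun hm => by rw [hmem] at hm; omega
        rw [if_neg this] at hstep
        omega
      · have : j + 1 ∈ S := hmem.mpr (by omega)
        rw [if_pos this] at hstep
        omega
  apply List.ext_getElem
  · rw [length_wOf, hlen]
  · intro j h1 h2
    have hjn : j < n := by rw [length_wOf] at h1; exact h1
    rw [getElem_wOf, ← hgel j hjn, hc j hjn]

lemma wOf_inj {n : ℕ} (hn : 1 ≤ n) :
    ∀ S1 ∈ (Finset.Icc 1 (n - 1)).powerset, ∀ S2 ∈ (Finset.Icc 1 (n - 1)).powerset,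
      wOf S1 n = wOf S2 n → S1 = S2 := by
  intro S1 hS1 S2 hS2 heq
  rw [Finset.mem_powerset] at hS1 hS2
  have hcc : ∀ j, j < n → cS S1 j = cS S2 j := by
    intro j hj
    have h1 : (wOf S1 n)[j]'(by rw [length_wOf]; omega)
        = (wOf S2 n)[j]'(by rw [length_wOf]; omega) := by
      congr 1
    rw [getElem_wOf, getElem_wOf] at h1
    omega
  ext i
  by_cases hi : i ∈ Finset.Icc 1 (n - 1)
  · rw [Finset.mem_Icc] at hi
    have e1 := cS_succ S1 (i - 1)
    have e2 := cS_succ S2 (i - 1)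
    rw [show i - 1 + 1 = i from by omega] at e1 e2
    have q1 : cS S1 i = cS S2 i := hcc i (by omega)
    have q2 : cS S1 (i - 1) = cS S2 (i - 1) := hcc (i - 1) (by omega)
    by_cases h1 : i ∈ S1 <;> by_cases h2 : i ∈ S2 <;>
      simp only [h1, h2, if_true, if_false, iff_true, iff_false] at e1 e2 ⊢ <;>
      first
        | rfl
        | (exfalso; omega)
        | (simp [h1, h2]; omega)
  · constructor
    · intro h; exact absurd (hS1 h) hi
    · intro h; exact absurd (hS2 h) hi

lemma Rn_eq_image {n : ℕ} (hn : 1 ≤ n) :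
    Rn n [1, 2, 1] = ↑(((Finset.Icc 1 (n - 1)).powerset).image (fun S => wOf S n)) := by
  ext w
  simp only [Finset.coe_image, Set.mem_image, Finset.mem_coe]
  constructor
  · intro hw
    obtain ⟨S, hS, hSw⟩ := Rn_eq_wOf hn hw
    exact ⟨S, hS, hSw⟩
  · rintro ⟨S, hS, rfl⟩
    exact wOf_mem_Rn hn (Finset.mem_powerset.mp hS)

section Stats
variable {S : Finset ℕ} {n : ℕ}

lemma statLB_wOf (hn : 1 ≤ n) : statLB (wOf S n) = 0 := by
  unfold statLB
  rw [length_wOf]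
  apply Finset.sum_eq_zero
  intro j hj
  rw [Finset.mem_range] at hj
  rw [Finset.card_eq_zero, Finset.filter_eq_empty_iff]
  intro v hv
  rw [mem_toFinset_take S j (by omega)] at hv
  obtain ⟨i, hij, rfl⟩ := hv
  rw [getD_wOf S hj]
  have := cS_mono S (le_of_lt hij)
  omega

lemma statRS_wOf (hn : 1 ≤ n) : statRS (wOf S n) = 0 := by
  unfold statRS
  rw [length_wOf]
  apply Finset.sum_eq_zero
  intro j hj
  rw [Finset.mem_range] at hj
  rw [Finset.card_eq_zero, Finset.filter_eq_empty_iff]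
  intro v hv
  rw [mem_toFinset_drop S (j + 1)] at hv
  obtain ⟨i, hij, hin, rfl⟩ := hv
  rw [getD_wOf S hj]
  have := cS_mono S (show j ≤ i by omega)
  omega

lemma statLS_wOf (hn : 1 ≤ n) (hS : S ⊆ Finset.Icc 1 (n - 1)) :
    statLS (wOf S n) = ∑ i ∈ S, (n - i) := by
  unfold statLS
  rw [length_wOf]
  have hterm : ∀ j ∈ Finset.range n,
      (((wOf S n).take j).toFinset.filter (fun v => v < (wOf S n).getD j 0)).card
        = cS S j := by
    intro j hj
    rw [Finset.mem_range] at hj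
    have hset : ((wOf S n).take j).toFinset.filter (fun v => v < (wOf S n).getD j 0)
        = Finset.Icc 1 (cS S j) := by
      ext v
      rw [Finset.mem_filter, mem_toFinset_take S j (by omega), getD_wOf S hj,
        Finset.mem_Icc]
      constructor
      · rintro ⟨⟨i, hi, rfl⟩, hlt⟩
        omega
      · rintro ⟨h1, h2⟩
        rcases Nat.eq_zero_or_pos j with rfl | hj0
        · rw [cS_zero hS] at h2; omega
        · have hstep : cS S j ≤ cS S (j - 1) + 1 := by
            have := cS_succ S (j - 1)
            have hjj : j - 1 + 1 = j := by omega
            rw [hjj] at this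
            split at this <;> omega
          obtain ⟨i, hi1, hi2, hi3⟩ := ivt (cS S) (j - 1)
            (fun i _ => cS_step S i trivial) 0 (v - 1) (by omega)
            (by rw [cS_zero hS]; omega) (by omega)
          exact ⟨⟨i, by omega, by omega⟩, by omega⟩
    rw [hset, Nat.card_Icc]
    omega
  rw [Finset.sum_congr rfl hterm]
  have : ∀ j ∈ Finset.range n, cS S j = ∑ i ∈ S, if i ≤ j then 1 else 0 := by
    intro j _; exact Finset.card_filter _ _
  rw [Finset.sum_congr rfl this, Finset.sum_comm]
  apply Finset.sum_congr rfl
  intro i hi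
  have hin : i ≤ n - 1 := by
    have := hS hi; rw [Finset.mem_Icc] at this; exact this.2
  rw [← Finset.card_filter]
  have : (Finset.range n).filter (fun j => i ≤ j) = Finset.Ico i n := by
    ext x; simp only [Finset.mem_filter, Finset.mem_range, Finset.mem_Ico]; omega
  rw [this, Nat.card_Ico]

lemma statRB_wOf (hn : 1 ≤ n) (hS : S ⊆ Finset.Icc 1 (n - 1)) :
    statRB (wOf S n) = ∑ i ∈ S, i := by
  unfold statRB
  rw [length_wOf]
  have hterm : ∀ j ∈ Finset.range n,
      (((wOf S n).drop (j + 1)).toFinset.filter (fun v => (wOf S n).getD j 0 < v)).card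
        = (S.filter (fun i => j < i)).card := by
    intro j hj
    rw [Finset.mem_range] at hj
    have hset : ((wOf S n).drop (j + 1)).toFinset.filter (fun v => (wOf S n).getD j 0 < v)
        = Finset.Icc (cS S j + 2) (cS S (n - 1) + 1) := by
      ext v
      rw [Finset.mem_filter, mem_toFinset_drop S (j + 1), getD_wOf S hj, Finset.mem_Icc]
      constructor
      · rintro ⟨⟨i, hi1, hi2, rfl⟩, hlt⟩
        have := cS_mono S (show i ≤ n - 1 by omega)
        omega
      · rintro ⟨h1, h2⟩
        obtain ⟨i, hi1, hi2, hi3⟩ := ivt (cS S) (n - 1)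
          (fun i _ => cS_step S i trivial) j (v - 1) (by omega) (by omega) (by omega)
        have hij : j < i := by
          rcases Nat.eq_or_lt_of_le hi1 with rfl | h
          · omega
          · exact h
        exact ⟨⟨i, by omega, by omega, by omega⟩, by omega⟩
    rw [hset, Nat.card_Icc]
    have hfull : cS S (n - 1) = S.card := by
      unfold cS
      rw [Finset.filter_true_of_mem]
      intro x hx
      have := hS hx; rw [Finset.mem_Icc] at this; exact this.2
    have hsplit := Finset.card_filter_add_card_filter_not
      (s := S) (p := fun i => i ≤ j)
    have hneg : S.filter (fun i => ¬ i ≤ j) = S.filter (fun i => j < i) := by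
      apply Finset.filter_congr; intro x _; simp only [Nat.not_le]
    rw [hneg] at hsplit
    have hmono := cS_mono S (show j ≤ n - 1 by omega)
    unfold cS at *
    omega
  rw [Finset.sum_congr rfl hterm]
  have : ∀ j ∈ Finset.range n, (S.filter (fun i => j < i)).card
      = ∑ i ∈ S, if j < i then 1 else 0 := by
    intro j _; exact Finset.card_filter _ _
  rw [Finset.sum_congr rfl this, Finset.sum_comm]
  apply Finset.sum_congr rfl
  intro i hi
  have hin : i ≤ n - 1 := by
    have := hS hi; rw [Finset.mem_Icc] at this; exact this.2
  rw [← Finset.card_filter]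
  have : (Finset.range n).filter (fun j => j < i) = Finset.range i := by
    ext x; simp only [Finset.mem_filter, Finset.mem_range]; omega
  rw [this, Finset.card_range]

end Stats

open MvPolynomial in
/-- `F_n(13/2;q,r,s,t) = ∏_{i=1}^{n-1} (1 + r^{n-i} s^i)`
(in particular it involves neither `q = X 0` nor `t = X 3`). -/
theorem stmt11 (n : ℕ) (hn : 1 ≤ n) :
    Fgen n [1, 2, 1] =
      ∏ i ∈ Finset.Icc 1 (n - 1),
        (1 + (X 1 : MvPolynomial (Fin 4) ℤ) ^ (n - i) * X 2 ^ i) := by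
  classical
  unfold Fgen
  rw [Rn_eq_image hn, finsum_mem_coe_finset, Finset.sum_image (wOf_inj hn)]
  have step : ∀ S ∈ (Finset.Icc 1 (n - 1)).powerset,
      (X 0 : MvPolynomial (Fin 4) ℤ) ^ statLB (wOf S n) * X 1 ^ statLS (wOf S n) *
        X 2 ^ statRB (wOf S n) * X 3 ^ statRS (wOf S n)
      = ∏ i ∈ S, ((X 1 : MvPolynomial (Fin 4) ℤ) ^ (n - i) * X 2 ^ i) := by
    intro S hS
    have hSsub := Finset.mem_powerset.mp hS
    rw [statLB_wOf hn, statLS_wOf hn hSsub, statRB_wOf hn hSsub, statRS_wOf hn,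
      pow_zero, one_mul, pow_zero, mul_one, Finset.prod_mul_distrib,
      Finset.prod_pow_eq_pow_sum, Finset.prod_pow_eq_pow_sum]
  rw [Finset.sum_congr rfl step]
  have hcomm : ∀ i ∈ Finset.Icc 1 (n - 1),
      (1 + (X 1 : MvPolynomial (Fin 4) ℤ) ^ (n - i) * X 2 ^ i)
        = ((X 1 : MvPolynomial (Fin 4) ℤ) ^ (n - i) * X 2 ^ i + 1) :=
    fun i _ => add_comm _ _
  rw [Finset.prod_congr rfl hcomm, Finset.prod_add]
  apply Finset.sum_congr rfl
  intro t _
  rw [Finset.prod_const_one, mul_one]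
end
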